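/- Let s^(1), ..., s^(n) be holomorphic vector fields on an open set U ⊆ ℂⁿ, s^(i) = Σ_k s^{ik} ∂/∂z^k, with the matrix S = (s^{ik}) invertible everywhere on U, and let σ = S^{-1} with entries s_{ij}. Then the symmetry condition ∂s_{ij}/∂z^l = ∂s_{lj}/∂z^i for all i, j, l holds if and only if the Lie brackets [s^(i), s^(k)] vanish for all i, k, which in components reads s^{ij} ∂s^{kl}/∂z^j = s^{kj} ∂s^{il}/∂z^j for all i, k, l. -/

import Mathlib

open Matrix Complex

/-- The Wirtinger derivative `∂f/∂zⁱ` of a function `f : ℂⁿ → ℂ`. -/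
noncomputable def wderiv {n : ℕ} (i : Fin n) (f : (Fin n → ℂ) → ℂ) (z : Fin n → ℂ) : ℂ :=
  (fderiv ℝ f z (Pi.single i 1) - Complex.I * fderiv ℝ f z (Pi.single i Complex.I)) / 2

namespace KICaux


noncomputable def D {n : ℕ} (l : Fin n) (f : (Fin n → ℂ) → ℂ) (z : Fin n → ℂ) : ℂ :=
  fderiv ℂ f z (Pi.single l 1)

lemma wderiv_eq {n : ℕ} (l : Fin n) (f : (Fin n → ℂ) → ℂ) (z : Fin n → ℂ)
    (hf : DifferentiableAt ℂ f z) : wderiv l f z = D l f z := by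
  have hR : fderiv ℝ f z = (fderiv ℂ f z).restrictScalars ℝ := hf.fderiv_restrictScalars ℝ
  have h1 : (Pi.single l Complex.I : Fin n → ℂ) = Complex.I • (Pi.single l 1 : Fin n → ℂ) := by
    funext k; by_cases h : k = l <;> simp [Pi.single_apply, h]
  rw [wderiv, D, hR]
  simp only [ContinuousLinearMap.coe_restrictScalars']
  rw [h1, (fderiv ℂ f z).map_smul, smul_eq_mul]
  set c := fderiv ℂ f z (Pi.single l 1) with hc
  have h2 : Complex.I * (Complex.I * c) = -c := by
    rw [← mul_assoc, Complex.I_mul_I]; ring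
  rw [h2]; ring

lemma diff_det {n : ℕ} (A : (Fin n → ℂ) → Matrix (Fin n) (Fin n) ℂ) (z : Fin n → ℂ)
    (hA : ∀ a b, DifferentiableAt ℂ (fun w => A w a b) z) :
    DifferentiableAt ℂ (fun w => (A w).det) z := by
  have he : (fun w => (A w).det) = fun w => ∑ σ : Equiv.Perm (Fin n),
      ((Equiv.Perm.sign σ : ℤ) : ℂ) * ∏ i, A w (σ i) i := by
    funext w; rw [Matrix.det_apply']
  rw [he]
  apply DifferentiableAt.fun_sum
  intro σ _
  apply DifferentiableAt.const_mul
  have := (HasFDerivAt.finset_prod (u := (Finset.univ : Finset (Fin n)))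
      (g := fun i w => A w (σ i) i)
      (fun i _ => (hA (σ i) i).hasFDerivAt)).differentiableAt
  exact this

lemma diff_inv_entry {n : ℕ} (S : (Fin n → ℂ) → Matrix (Fin n) (Fin n) ℂ) (z : Fin n → ℂ)
    (hA : ∀ a b, DifferentiableAt ℂ (fun w => S w a b) z)
    (hdet : (S z).det ≠ 0) (i j : Fin n) :
    DifferentiableAt ℂ (fun w => (S w)⁻¹ i j) z := by
  have hE : ∀ w : Fin n → ℂ, (S w)⁻¹ i j = ((S w).det)⁻¹ * (S w).adjugate i j := by
    intro w
    rw [Matrix.inv_def, Matrix.smul_apply, Ring.inverse_eq_inv', smul_eq_mul]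
  simp only [hE]
  apply DifferentiableAt.mul
  · exact (diff_det S z hA).inv hdet
  · have he : (fun w => (S w).adjugate i j)
        = fun w => ((S w).updateRow j (Pi.single i 1)).det := by
      funext w; rw [Matrix.adjugate_apply]
    rw [he]
    apply diff_det
    intro a b
    by_cases h : a = j
    · simp only [Matrix.updateRow_apply, if_pos h]
      exact differentiableAt_const _
    · simp only [Matrix.updateRow_apply, if_neg h]
      exact hA a b



lemma core {n : ℕ} (Sv σv : Matrix (Fin n) (Fin n) ℂ)
    (dS dσ : Fin n → Matrix (Fin n) (Fin n) ℂ)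
    (hSσ : Sv * σv = 1) (hσS : σv * Sv = 1)
    (hstar : ∀ l, dS l * σv + Sv * dσ l = 0) :
    (∀ i j l, dσ l i j = dσ i l j) ↔
    (∀ i k l, ∑ j, Sv i j * dS j k l = ∑ j, Sv k j * dS j i l) := by
  have htrans1 : σvᵀ * Svᵀ = 1 := by rw [← Matrix.transpose_mul, hSσ, Matrix.transpose_one]
  have htrans2 : Svᵀ * σvᵀ = 1 := by rw [← Matrix.transpose_mul, hσS, Matrix.transpose_one]
  have hdσ : ∀ l, dσ l = -(σv * dS l * σv) := by
    intro l
    have h1 : Sv * dσ l = -(dS l * σv) := by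
      have h := hstar l
      rw [add_comm] at h
      exact eq_neg_of_add_eq_zero_left h
    calc dσ l = (σv * Sv) * dσ l := by rw [hσS, one_mul]
      _ = σv * (Sv * dσ l) := by rw [mul_assoc]
      _ = σv * -(dS l * σv) := by rw [h1]
      _ = -(σv * dS l * σv) := by rw [mul_neg, mul_assoc]
  -- the key matrix-level equivalence
  have key : ∀ T : Matrix (Fin n) (Fin n) ℂ,
      (σv * Tᵀ = T * σvᵀ) ↔ (Sv * T = Tᵀ * Svᵀ) := by
    intro T
    constructor
    · intro h
      calc Sv * T = Sv * ((T * σvᵀ) * Svᵀ) := by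
            rw [mul_assoc, htrans1, mul_one]
        _ = Sv * ((σv * Tᵀ) * Svᵀ) := by rw [h]
        _ = (Sv * σv) * (Tᵀ * Svᵀ) := by
            rw [mul_assoc σv, ← mul_assoc Sv σv]
        _ = Tᵀ * Svᵀ := by rw [hSσ, one_mul]
    · intro h
      calc σv * Tᵀ = σv * ((Tᵀ * Svᵀ) * σvᵀ) := by
            rw [mul_assoc, htrans2, mul_one]
        _ = σv * ((Sv * T) * σvᵀ) := by rw [h]
        _ = (σv * Sv) * (T * σvᵀ) := by
            rw [mul_assoc Sv, ← mul_assoc σv Sv]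
        _ = T * σvᵀ := by rw [hσS, one_mul]
  set T : Fin n → Matrix (Fin n) (Fin n) ℂ := fun b => Matrix.of fun p q => dS p q b with hT
  -- entry identities
  have eT1 : ∀ b i l, (σv * (T b)ᵀ) i l = (σv * dS l) i b := by
    intro b i l
    rw [Matrix.mul_apply, Matrix.mul_apply]
    exact Finset.sum_congr rfl fun p _ => by simp [hT]
  have eT2 : ∀ b i l, (T b * σvᵀ) i l = (σv * dS i) l b := by
    intro b i l
    rw [Matrix.mul_apply, Matrix.mul_apply]
    exact Finset.sum_congr rfl fun p _ => by simp [hT, mul_comm]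
  have eB1 : ∀ l i k, (Sv * T l) i k = ∑ j, Sv i j * dS j k l := by
    intro l i k
    rw [Matrix.mul_apply]
    exact Finset.sum_congr rfl fun p _ => by simp [hT]
  have eB2 : ∀ l i k, ((T l)ᵀ * Svᵀ) i k = ∑ j, Sv k j * dS j i l := by
    intro l i k
    rw [Matrix.mul_apply]
    exact Finset.sum_congr rfl fun p _ => by simp [hT, mul_comm]
  -- A'' form
  have hAiff : (∀ i j l, dσ l i j = dσ i l j) ↔ (∀ l i b, (σv * dS l) i b = (σv * dS i) l b) := by
    constructor
    · intro hA l i b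
      calc (σv * dS l) i b = ((σv * dS l * σv) * Sv) i b := by
            rw [mul_assoc, hσS, mul_one]
        _ = ∑ j, (σv * dS l * σv) i j * Sv j b := Matrix.mul_apply
        _ = ∑ j, (σv * dS i * σv) l j * Sv j b := by
            refine Finset.sum_congr rfl fun j _ => ?_
            have := hA i j l
            rw [hdσ, hdσ] at this
            simp only [Matrix.neg_apply, neg_inj] at this
            rw [this]
        _ = ((σv * dS i * σv) * Sv) l b := Matrix.mul_apply.symm
        _ = (σv * dS i) l b := by rw [mul_assoc, hσS, mul_one]
    · intro hA' i j l
      rw [hdσ, hdσ]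
      simp only [Matrix.neg_apply, neg_inj]
      calc (σv * dS l * σv) i j = ∑ p, (σv * dS l) i p * σv p j := Matrix.mul_apply
        _ = ∑ p, (σv * dS i) l p * σv p j := by
            refine Finset.sum_congr rfl fun p _ => ?_
            rw [hA' l i p]
        _ = (σv * dS i * σv) l j := Matrix.mul_apply.symm
  rw [hAiff]
  constructor
  · intro hA' i k l
    have hsymm : σv * (T l)ᵀ = T l * σvᵀ := by
      ext p q
      rw [eT1, eT2]
      exact hA' q p l
    have hB := (key (T l)).1 hsymm
    calc ∑ j, Sv i j * dS j k l = (Sv * T l) i k := (eB1 l i k).symm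
      _ = ((T l)ᵀ * Svᵀ) i k := by rw [hB]
      _ = ∑ j, Sv k j * dS j i l := eB2 l i k
  · intro hB l i b
    have hBm : Sv * T b = (T b)ᵀ * Svᵀ := by
      ext p q
      rw [eB1, eB2]
      exact hB p q b
    have hsymm := (key (T b)).2 hBm
    calc (σv * dS l) i b = (σv * (T b)ᵀ) i l := (eT1 b i l).symm
      _ = (T b * σvᵀ) i l := by rw [hsymm]
      _ = (σv * dS i) l b := eT2 b i l

end KICaux

open KICaux

/-- for a holomorphic matrix `S = (sⁱᵏ)` of vector-field components, invertible
everywhere on an open set `U ⊆ ℂⁿ`, with inverse `σ = (s_{ij})`, the symmetry condition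
`∂s_{ij}/∂zˡ = ∂s_{lj}/∂zⁱ` holds on `U` iff the Lie brackets of the vector fields vanish,
i.e. `sⁱʲ ∂sᵏˡ/∂zʲ = sᵏʲ ∂sⁱˡ/∂zʲ` (sum over `j`) for all `i,k,l` on `U`. -/
theorem kaehler_iff_commute {n : ℕ} (U : Set (Fin n → ℂ)) (hU : IsOpen U)
    (S : (Fin n → ℂ) → Matrix (Fin n) (Fin n) ℂ)
    (hS : ∀ i j : Fin n, DifferentiableOn ℂ (fun z => S z i j) U)
    (hinv : ∀ z ∈ U, IsUnit (S z).det) :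
    (∀ z ∈ U, ∀ i j l : Fin n,
        wderiv l (fun w => (S w)⁻¹ i j) z = wderiv i (fun w => (S w)⁻¹ l j) z)
      ↔
    (∀ z ∈ U, ∀ i k l : Fin n,
        ∑ j : Fin n, S z i j * wderiv j (fun w => S w k l) z
          = ∑ j : Fin n, S z k j * wderiv j (fun w => S w i l) z) := by
  have key : ∀ z ∈ U,
      ((∀ i j l : Fin n,
          wderiv l (fun w => (S w)⁻¹ i j) z = wderiv i (fun w => (S w)⁻¹ l j) z)
        ↔
      (∀ i k l : Fin n,
          ∑ j : Fin n, S z i j * wderiv j (fun w => S w k l) z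
            = ∑ j : Fin n, S z k j * wderiv j (fun w => S w i l) z)) := by
    intro z hz
    have hS' : ∀ a b, DifferentiableAt ℂ (fun w => S w a b) z :=
      fun a b => (hS a b).differentiableAt (hU.mem_nhds hz)
    have hdet : (S z).det ≠ 0 := (hinv z hz).ne_zero
    have hσd : ∀ a b, DifferentiableAt ℂ (fun w => (S w)⁻¹ a b) z :=
      diff_inv_entry S z hS' hdet
    have hSσ : S z * (S z)⁻¹ = 1 := Matrix.mul_nonsing_inv _ (hinv z hz)
    have hσS : (S z)⁻¹ * S z = 1 := Matrix.nonsing_inv_mul _ (hinv z hz)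
    -- derivative of the constant identity S * S⁻¹ = 1
    have hD0 : ∀ l i j, ∑ a : Fin n, (D l (fun w => S w i a) z * (S z)⁻¹ a j
        + S z i a * D l (fun w => (S w)⁻¹ a j) z) = 0 := by
      intro l i j
      have hdiff : ∀ a : Fin n, DifferentiableAt ℂ (fun w => S w i a * (S w)⁻¹ a j) z :=
        fun a => (hS' i a).mul (hσd a j)
      have h0 : fderiv ℂ (fun w => ∑ a : Fin n, S w i a * (S w)⁻¹ a j) z = 0 := by
        have heq : (fun w => ∑ a : Fin n, S w i a * (S w)⁻¹ a j) =ᶠ[nhds z]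
            (fun _ => if i = j then (1:ℂ) else 0) := by
          filter_upwards [hU.mem_nhds hz] with w hw
          have h1 := Matrix.mul_nonsing_inv (S w) (hinv w hw)
          have h2 : (S w * (S w)⁻¹) i j = (1 : Matrix (Fin n) (Fin n) ℂ) i j := by rw [h1]
          simpa [Matrix.mul_apply, Matrix.one_apply] using h2
        rw [Filter.EventuallyEq.fderiv_eq (𝕜 := ℂ) heq]
        exact fderiv_const_apply _
      have h1 : fderiv ℂ (fun w => ∑ a : Fin n, S w i a * (S w)⁻¹ a j) z
          = ∑ a : Fin n, fderiv ℂ (fun w => S w i a * (S w)⁻¹ a j) z :=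
        fderiv_fun_sum (fun a _ => hdiff a)
      have h2 := congrArg (fun (L : (Fin n → ℂ) →L[ℂ] ℂ) => L (Pi.single l 1))
        (h1.symm.trans h0)
      simp only [ContinuousLinearMap.coe_sum', Finset.sum_apply,
        ContinuousLinearMap.zero_apply] at h2
      have h3 : ∀ a : Fin n, fderiv ℂ (fun w => S w i a * (S w)⁻¹ a j) z (Pi.single l 1)
          = D l (fun w => S w i a) z * (S z)⁻¹ a j
            + S z i a * D l (fun w => (S w)⁻¹ a j) z := by
        intro a
        rw [fderiv_fun_mul (hS' i a) (hσd a j)]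
        simp only [ContinuousLinearMap.add_apply, ContinuousLinearMap.coe_smul',
          Pi.smul_apply, smul_eq_mul, D]
        ring
      calc ∑ a : Fin n, (D l (fun w => S w i a) z * (S z)⁻¹ a j
            + S z i a * D l (fun w => (S w)⁻¹ a j) z)
          = ∑ a : Fin n, fderiv ℂ (fun w => S w i a * (S w)⁻¹ a j) z (Pi.single l 1) :=
            Finset.sum_congr rfl fun a _ => (h3 a).symm
        _ = 0 := h2
    have hstar : ∀ l, (Matrix.of fun a b => D l (fun w => S w a b) z) * (S z)⁻¹
        + S z * (Matrix.of fun a b => D l (fun w => (S w)⁻¹ a b) z) = 0 := by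
      intro l
      ext i j
      simp only [Matrix.add_apply, Matrix.mul_apply, Matrix.of_apply, Matrix.zero_apply]
      rw [← Finset.sum_add_distrib]
      exact hD0 l i j
    have hiff := core (S z) (S z)⁻¹
      (fun l => Matrix.of fun a b => D l (fun w => S w a b) z)
      (fun l => Matrix.of fun a b => D l (fun w => (S w)⁻¹ a b) z)
      hSσ hσS hstar
    constructor
    · intro hA i k l
      have h := hiff.1 (fun i j l => by
        have := hA i j l
        rw [wderiv_eq _ _ _ (hσd i j), wderiv_eq _ _ _ (hσd l j)] at this
        exact this) i k l
      calc ∑ j : Fin n, S z i j * wderiv j (fun w => S w k l) z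
          = ∑ j : Fin n, S z i j * D j (fun w => S w k l) z :=
            Finset.sum_congr rfl fun j _ => by rw [wderiv_eq _ _ _ (hS' k l)]
        _ = ∑ j : Fin n, S z k j * D j (fun w => S w i l) z := h
        _ = ∑ j : Fin n, S z k j * wderiv j (fun w => S w i l) z :=
            Finset.sum_congr rfl fun j _ => by rw [wderiv_eq _ _ _ (hS' i l)]
    · intro hB i j l
      have h := hiff.2 (fun i k l => by
        have := hB i k l
        calc ∑ j : Fin n, S z i j * D j (fun w => S w k l) z
            = ∑ j : Fin n, S z i j * wderiv j (fun w => S w k l) z :=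
              Finset.sum_congr rfl fun j _ => by rw [wderiv_eq _ _ _ (hS' k l)]
          _ = ∑ j : Fin n, S z k j * wderiv j (fun w => S w i l) z := this
          _ = ∑ j : Fin n, S z k j * D j (fun w => S w i l) z :=
              Finset.sum_congr rfl fun j _ => by rw [wderiv_eq _ _ _ (hS' i l)]) i j l
      rw [wderiv_eq _ _ _ (hσd i j), wderiv_eq _ _ _ (hσd l j)]
      exact h
  constructor
  · intro h z hz; exact (key z hz).1 (h z hz)
  · intro h z hz; exact (key z hz).2 (h z hz)
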